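/- Given a nested system of fundamental sequences on Γ and an infinite set M ⊆ ℕ with min M > 1, for each ordinal α ≤ Γ the set B^α of α-size subsets of M is a smooth barrier. -/

import Mathlib

open Ordinal

/-- A system of fundamental sequences on `Γ`: to each ordinal `α ≤ Γ` we associate a
non-decreasing sequence `fs α n` with `sup {fs α n + 1 : n} = α` for `α ≠ 0`, and `fs 0 n = 0`. -/
structure FSSystem (Γ : Ordinal) where
  fs : Ordinal → ℕ → Ordinal
  fs_zero : ∀ n, fs 0 n = 0
  mono : ∀ α, α ≤ Γ → Monotone (fs α)
  sup_eq : ∀ α, α ≤ Γ → α ≠ 0 → (⨆ n : ℕ, fs α n + 1) = α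

/-- The system is nested: it is never the case, for `γ < β ≤ Γ` and `n > 1`,
that `γ > β[n] > γ[n]`. -/
def FSSystem.Nested {Γ : Ordinal} (S : FSSystem Γ) : Prop :=
  ∀ γ β (n : ℕ), γ < β → β ≤ Γ → 1 < n → ¬ (S.fs γ n < S.fs β n ∧ S.fs β n < γ)

/-- Iterated evaluation `α[s_0][s_1]…[s_{m-1}]` along a list. -/
def FSSystem.evalL {Γ : Ordinal} (S : FSSystem Γ) (α : Ordinal) (s : List ℕ) : Ordinal :=
  s.foldl S.fs α

/-- The base of a family of finite increasing sequences: all naturals occurring in it. -/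
def sbase (B : Set (List ℕ)) : Set ℕ := {n | ∃ s ∈ B, n ∈ s}

/-- A block: a non-degenerate front. Finite subsets of `ℕ` are identified with their increasing
enumerations. Every infinite subset of the base (given by its increasing enumeration `f`) has an
initial segment in `B`, and `B` is prefix-free. -/
structure IsBlock (B : Set (List ℕ)) : Prop where
  sorted : ∀ s ∈ B, s.Pairwise (· < ·)
  base_infinite : (sbase B).Infinite
  prefix_exists : ∀ f : ℕ → ℕ, StrictMono f → (∀ i, f i ∈ sbase B) →
    ∃ k, (List.range k).map f ∈ B
  prefix_free : ∀ s ∈ B, ∀ t ∈ B, s <+: t → s = t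

/-- Smoothness: for `s, t ∈ B` with `|s| < |t|` there is `i < |s|` with `s(i) < t(i)`. -/
def IsSmooth (B : Set (List ℕ)) : Prop :=
  ∀ s ∈ B, ∀ t ∈ B, s.length < t.length →
    ∃ i, ∃ (hi : i < s.length) (hi' : i < t.length), s.get ⟨i, hi⟩ < t.get ⟨i, hi'⟩

/-- The tree `T(B)`: the closure of `B` under initial segments. -/
def TreeOf (B : Set (List ℕ)) : Set (List ℕ) := {s | ∃ t ∈ B, s <+: t}

/-- The child relation on the tree `T(B)`: `t` is a one-point extension of `s` lying in `T(B)`. -/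
def childRel (B : Set (List ℕ)) (t s : List ℕ) : Prop :=
  t ∈ TreeOf B ∧ ∃ n, t = s ++ [n]

/-- The height of the node `s` in the well-founded tree `T(B)`. -/
noncomputable def nodeHt (B : Set (List ℕ)) (h : WellFounded (childRel B)) (s : List ℕ) :
    Ordinal :=
  (h.apply s).rank

/-- The height `ht(B)` of the front `B`: the height of the tree `T(B)`. -/
noncomputable def htB (B : Set (List ℕ)) (h : WellFounded (childRel B)) : Ordinal :=
  nodeHt B h []

/-- A smooth barrier, allowing the degenerate front `{⟨⟩}`. -/
def IsSmoothBarrier (B : Set (List ℕ)) : Prop :=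
  B = {([] : List ℕ)} ∨ (IsBlock B ∧ IsSmooth B)

/-- The family `B^α` of `α`-size subsets of `M`: the minimal `α`-large increasing sequences
from `M`. -/
def sizeFam {Γ : Ordinal} (S : FSSystem Γ) (α : Ordinal) (M : Set ℕ) : Set (List ℕ) :=
  {s | s.Pairwise (· < ·) ∧ (∀ x ∈ s, x ∈ M) ∧
    S.evalL α s = 0 ∧ (s = [] ∨ S.evalL α s.dropLast ≠ 0)}

namespace FSSystem

variable {Γ : Ordinal} (S : FSSystem Γ)

lemma fs_lt {a : Ordinal} (ha : a ≤ Γ) (h0 : a ≠ 0) (n : ℕ) : S.fs a n < a := by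
  have h1 : S.fs a n + 1 ≤ ⨆ m : ℕ, S.fs a m + 1 :=
    le_ciSup (Ordinal.bddAbove_range _) n
  rw [S.sup_eq a ha h0] at h1
  exact lt_of_lt_of_le (lt_add_one _) h1

lemma fs_le {a : Ordinal} (ha : a ≤ Γ) (n : ℕ) : S.fs a n ≤ a := by
  rcases eq_or_ne a 0 with rfl | h0
  · simp [S.fs_zero]
  · exact (S.fs_lt ha h0 n).le

@[simp] lemma evalL_nil (a : Ordinal) : S.evalL a [] = a := rfl

lemma evalL_cons (a : Ordinal) (n : ℕ) (w : List ℕ) :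
    S.evalL a (n :: w) = S.evalL (S.fs a n) w := rfl

lemma evalL_append (a : Ordinal) (u v : List ℕ) :
    S.evalL a (u ++ v) = S.evalL (S.evalL a u) v :=
  List.foldl_append

lemma evalL_concat (a : Ordinal) (u : List ℕ) (n : ℕ) :
    S.evalL a (u ++ [n]) = S.fs (S.evalL a u) n :=
  S.evalL_append a u [n]

@[simp] lemma evalL_zero (w : List ℕ) : S.evalL 0 w = 0 := by
  induction w with
  | nil => rfl
  | cons n w ih => rw [evalL_cons, S.fs_zero]; exact ih

lemma evalL_le {a : Ordinal} (ha : a ≤ Γ) (w : List ℕ) : S.evalL a w ≤ a := by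
  induction w generalizing a with
  | nil => exact le_rfl
  | cons n w ih =>
    rw [evalL_cons]
    exact (ih ((S.fs_le ha n).trans ha)).trans (S.fs_le ha n)

lemma evalL_le_Gamma {a : Ordinal} (ha : a ≤ Γ) (w : List ℕ) : S.evalL a w ≤ Γ :=
  (S.evalL_le ha w).trans ha

/-- The key consequence of nestedness: if `b` is obtained from `g` by a nonempty
evaluation along indices `> 1` and `≤ u`, and `b < A ≤ g`, then `b ≤ fs A u`. -/
lemma nested_key (hN : S.Nested) (u : ℕ) :
    ∀ (w : List ℕ) (g A : Ordinal), g ≤ Γ → A ≤ g → w ≠ [] →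
      (∀ x ∈ w, 1 < x ∧ x ≤ u) → S.evalL g w < A → S.evalL g w ≤ S.fs A u := by
  intro w
  induction w with
  | nil => intro g A _ _ hne _ _; exact absurd rfl hne
  | cons n w ih =>
    intro g A hg hAg _ hent heval
    obtain ⟨hn1, hnu⟩ := hent n (List.mem_cons_self (a := n) (l := w))
    rw [evalL_cons] at heval ⊢
    rcases le_or_gt A (S.fs g n) with hAc | hcA
    · rcases eq_or_ne w [] with rfl | hwne
      · rw [evalL_nil] at heval; exact absurd (heval.trans_le hAc) (lt_irrefl _)
      · exact ih (S.fs g n) A ((S.fs_le hg n).trans hg) hAc hwne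
          (fun x hx => hent x (List.mem_cons_of_mem n hx)) heval
    · have hb : S.evalL (S.fs g n) w ≤ S.fs g n :=
        S.evalL_le ((S.fs_le hg n).trans hg) w
      rcases eq_or_lt_of_le hAg with rfl | hAg'
      · exact hb.trans (S.mono A hg hnu)
      · have h2 : ¬(S.fs A n < S.fs g n ∧ S.fs g n < A) := hN A g n hAg' hg hn1
        have h3 : S.fs g n ≤ S.fs A n := not_lt.mp (fun hh => h2 ⟨hh, hcA⟩)
        exact hb.trans (h3.trans (S.mono A (hAg.trans hg) hnu))

lemma exists_mem_sizeFam {M : Set ℕ} {α : Ordinal} (hα : α ≤ Γ)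
    (f : ℕ → ℕ) (hf : StrictMono f) (hfM : ∀ i, f i ∈ M) :
    ∃ k, (List.range k).map f ∈ sizeFam S α M := by
  classical
  set g : ℕ → Ordinal := fun k => S.evalL α ((List.range k).map f) with hg
  have hstep : ∀ k, g (k + 1) = S.fs (g k) (f k) := by
    intro k
    simp only [hg, List.range_succ, List.map_append, List.map_cons, List.map_nil]
    exact S.evalL_concat α _ (f k)
  have hleΓ : ∀ k, g k ≤ Γ := fun k => S.evalL_le_Gamma hα _
  have hex : ∃ k, g k = 0 := by
    by_contra h
    push_neg at h
    obtain ⟨a, ⟨k, rfl⟩, hmin⟩ := Ordinal.lt_wf.has_min (Set.range g) ⟨g 0, ⟨0, rfl⟩⟩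
    exact hmin (g (k + 1)) ⟨k + 1, rfl⟩ (by rw [hstep]; exact S.fs_lt (hleΓ k) (h k) _)
  refine ⟨Nat.find hex, ?_, ?_, Nat.find_spec hex, ?_⟩
  · exact List.Pairwise.map _ (fun a b h => hf h) List.pairwise_lt_range
  · intro x hx
    simp only [List.mem_map, List.mem_range] at hx
    obtain ⟨i, _, rfl⟩ := hx
    exact hfM i
  · rcases eq_or_ne (Nat.find hex) 0 with h0 | h0
    · left; rw [h0]; rfl
    · right
      obtain ⟨j, hj⟩ := Nat.exists_eq_succ_of_ne_zero h0
      rw [hj]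
      have : ((List.range (j + 1)).map f).dropLast = (List.range j).map f := by
        rw [List.range_succ, List.map_append, List.map_cons, List.map_nil,
          List.dropLast_concat]
      rw [this]
      exact Nat.find_min hex (by omega)

end FSSystem

/-- Given a nested system of fundamental sequences on `Γ` and an infinite `M ⊆ ℕ` with
`min M > 1`, for each `α ≤ Γ` the set `B^α` of `α`-size subsets of `M` is a smooth barrier. -/
theorem sizeFam_isSmoothBarrier {Γ : Ordinal} (S : FSSystem Γ) (hN : S.Nested)
    (M : Set ℕ) (hM : M.Infinite) (hM1 : ∀ m ∈ M, 1 < m)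
    (α : Ordinal) (hα : α ≤ Γ) :
    IsSmoothBarrier (sizeFam S α M) := by
  classical
  rcases eq_or_ne α 0 with rfl | hα0
  · left
    ext s
    simp only [sizeFam, Set.mem_setOf_eq, Set.mem_singleton_iff]
    constructor
    · rintro ⟨-, -, -, h | h⟩
      · exact h
      · exact absurd (S.evalL_zero _) h
    · rintro rfl
      exact ⟨List.Pairwise.nil, by simp, rfl, Or.inl rfl⟩
  · right
    -- entries of members are in M
    have hmemM : ∀ s ∈ sizeFam S α M, ∀ x ∈ s, x ∈ M := fun s hs => hs.2.1
    have hbaseM : ∀ x ∈ sbase (sizeFam S α M), x ∈ M := by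
      rintro x ⟨s, hs, hxs⟩
      exact hmemM s hs x hxs
    have hblock : IsBlock (sizeFam S α M) := by
      constructor
      · exact fun s hs => hs.1
      · -- base_infinite
        by_contra hfin
        rw [Set.not_infinite] at hfin
        obtain ⟨N, hN⟩ := hfin.bddAbove
        obtain ⟨m, hmM, hNm⟩ := hM.exists_gt N
        set M' : Set ℕ := M \ Set.Iio m with hM'
        have hM'inf : M'.Infinite := hM.diff (Set.finite_Iio m)
        haveI : Infinite ↥M' := hM'inf.to_subtype
        set f : ℕ → ℕ := ⇑(Nat.orderEmbeddingOfSet M') with hfdef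
        have hfr : ∀ i, f i ∈ M' := by
          intro i
          have : f i ∈ Set.range f := ⟨i, rfl⟩
          rwa [hfdef, Nat.orderEmbeddingOfSet_range] at this
        obtain ⟨k, hk⟩ := S.exists_mem_sizeFam hα f
          (Nat.orderEmbeddingOfSet M').strictMono (fun i => (hfr i).1)
        have hk0 : k ≠ 0 := by
          rintro rfl
          exact hα0 hk.2.2.1
        have hf0 : f 0 ∈ sbase (sizeFam S α M) := by
          refine ⟨(List.range k).map f, hk, ?_⟩
          simp only [List.mem_map, List.mem_range]
          exact ⟨0, Nat.pos_of_ne_zero hk0, rfl⟩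
        have h1 : f 0 ≤ N := hN hf0
        have h2 : m ≤ f 0 := not_lt.mp (hfr 0).2
        omega
      · -- prefix_exists
        intro f hf hfB
        exact S.exists_mem_sizeFam hα f hf (fun i => hbaseM _ (hfB i))
      · -- prefix_free
        rintro s hs t ht ⟨r, rfl⟩
        rcases eq_or_ne r [] with rfl | hrne
        · simp
        · exfalso
          have htne : s ++ r ≠ [] := fun h => hrne (List.append_eq_nil_iff.mp h).2
          have hdrop : (s ++ r).dropLast = s ++ r.dropLast := by
            obtain ⟨a, r', rfl⟩ := List.exists_cons_of_ne_nil hrne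
            exact List.dropLast_append_cons
          have : S.evalL α (s ++ r).dropLast = 0 := by
            rw [hdrop, S.evalL_append, hs.2.2.1, S.evalL_zero]
          rcases ht.2.2.2 with h | h
          · exact htne h
          · exact h this
    refine ⟨hblock, ?_⟩
    -- smoothness
    intro s hs t ht hlen
    by_contra hcon
    push_neg at hcon
    have hts : ∀ i (hi : i < s.length) (hi' : i < t.length),
        t.get ⟨i, hi'⟩ ≤ s.get ⟨i, hi⟩ := hcon
    have haleΓ : ∀ w : List ℕ, S.evalL α w ≤ Γ := fun w => S.evalL_le_Gamma hα w
    -- key claim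
    have key : ∀ i, i ≤ s.length → S.evalL α (t.take i) ≤ S.evalL α (s.take i) := by
      intro i
      induction i with
      | zero => intro _; simp
      | succ i ih =>
        intro hik
        have hik' : i < s.length := hik
        have hit : i < t.length := hik'.trans hlen
        have htsi : t[i] ≤ s[i] := hts i hik' hit
        have htakes : s.take (i + 1) = s.take i ++ [s[i]] := by
          rw [List.take_succ, List.getElem?_eq_getElem hik']
          rfl
        have htaket : t.take (i + 1) = t.take i ++ [t[i]] := by
          rw [List.take_succ, List.getElem?_eq_getElem hit]
          rfl
        rw [htakes, htaket, S.evalL_concat, S.evalL_concat]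
        set a := S.evalL α (s.take i) with hadef
        set b := S.evalL α (t.take i) with hbdef
        have hb := ih hik'.le
        rcases eq_or_lt_of_le hb with heq | hlt
        · rw [heq]
          exact S.mono a (haleΓ _) htsi
        · have hi0 : i ≠ 0 := by
            rintro rfl
            rw [hadef, hbdef] at hlt
            simp at hlt
          have hwne : t.take i ≠ [] := by
            have : (t.take i).length = i := by
              rw [List.length_take]
              omega
            intro h
            rw [h] at this
            simp at this
            omega
          have hE : b ≤ S.fs a t[i] := by
            refine S.nested_key hN t[i] (t.take i) α a hα (S.evalL_le hα _) hwne ?_ hlt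
            intro x hx
            rw [List.mem_take_iff_getElem] at hx
            obtain ⟨j, hj, rfl⟩ := hx
            have hjt : j < t.length := (lt_min_iff.mp hj).2
            have hji : j < i := (lt_min_iff.mp hj).1
            constructor
            · exact hM1 _ (ht.2.1 _ (List.getElem_mem hjt))
            · have := ht.1.sortedLT.strictMono_get
                (show (⟨j, hjt⟩ : Fin t.length) < ⟨i, hit⟩ from hji)
              simp only [List.get_eq_getElem] at this
              exact this.le
          rcases eq_or_ne b 0 with hb0 | hb0
          · rw [hb0, S.fs_zero]
            exact zero_le
          · exact le_of_lt (calc S.fs b t[i] < b := S.fs_lt (haleΓ _) hb0 _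
              _ ≤ S.fs a t[i] := hE
              _ ≤ S.fs a s[i] := S.mono a (haleΓ _) htsi)
    -- conclude
    have h0 : S.evalL α (t.take s.length) = 0 := by
      have := key s.length le_rfl
      rw [List.take_length, hs.2.2.1, nonpos_iff_eq_zero] at this
      exact this
    have hdl : S.evalL α t.dropLast = 0 := by
      rw [List.dropLast_eq_take]
      have hkle : s.length ≤ t.length - 1 := by omega
      have hsplit : t.take (t.length - 1) =
          t.take s.length ++ ((t.take (t.length - 1)).drop s.length) := by
        conv_lhs => rw [← List.take_append_drop s.length (t.take (t.length - 1))]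
        rw [List.take_take, min_eq_left hkle]
      rw [hsplit, S.evalL_append, h0, S.evalL_zero]
    have htne : t ≠ [] := by
      intro h
      rw [h] at hlen
      simp at hlen
    rcases ht.2.2.2 with h | h
    · exact htne h
    · exact h hdl
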